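/- arXiv:1301.5584 — 3 statements merged into one kernel-verified Lean document; each statement's English description precedes it below -/
import Mathlib

section
/- Assume n ≥ 2. There exist nonzero disjointly supported functions f₊, f₋ : V → ℝ with f₊ ≥ 0 pointwise and f₋ ≤ 0 pointwise, such that R(f₊) ≤ λ₂ and R(f₋) ≤ λ₂. -/
open scoped Classical
open Matrix

namespace CheegerHigher

noncomputable section

variable {n : ℕ}

/-- Weighted degree of a vertex: `w(v) = ∑_u w(v,u)`. -/
def deg (w : Fin n → Fin n → ℝ) (v : Fin n) : ℝ := ∑ u, w v u

/-- Volume of a vertex set. -/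
def vol (w : Fin n → Fin n → ℝ) (S : Finset (Fin n)) : ℝ := ∑ v ∈ S, deg w v

/-- Total weight of (ordered) pairs from `S` to `T`; for disjoint `S`, `T` this is `w(E(S,T))`. -/
def cutWeight (w : Fin n → Fin n → ℝ) (S T : Finset (Fin n)) : ℝ :=
  ∑ u ∈ S, ∑ v ∈ T, w u v

/-- Total edge weight `w(E)` (each unordered edge counted once). -/
def totalWeight (w : Fin n → Fin n → ℝ) : ℝ := (1 / 2 : ℝ) * ∑ u, ∑ v, w u v

/-- Conductance of a set `S`. -/
noncomputable def conductance (w : Fin n → Fin n → ℝ) (S : Finset (Fin n)) : ℝ :=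
  cutWeight w S Sᶜ / min (vol w S) (vol w Sᶜ)

/-- Conductance of the graph: minimum over nonempty proper subsets. -/
noncomputable def minConductance (w : Fin n → Fin n → ℝ) : ℝ :=
  sInf { x | ∃ S : Finset (Fin n), S.Nonempty ∧ S ≠ Finset.univ ∧ x = conductance w S }

/-- `k`-way expansion: min over `k` pairwise disjoint nonempty subsets of the max conductance. -/
noncomputable def multiwayExpansion (w : Fin n → Fin n → ℝ) (k : ℕ) : ℝ :=
  sInf { x | ∃ S : Fin k → Finset (Fin n), (∀ i, (S i).Nonempty) ∧
      (∀ i j, i ≠ j → Disjoint (S i) (S j)) ∧ x = ⨆ i, conductance w (S i) }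

/-- `‖f‖_w²  = ∑_v w(v) f(v)²`. -/
def normWsq (w : Fin n → Fin n → ℝ) (f : Fin n → ℝ) : ℝ := ∑ v, deg w v * f v ^ 2

/-- Dirichlet energy `∑_{{u,v} ∈ E} w(u,v) (f(u)-f(v))²` (each unordered edge once). -/
def energy (w : Fin n → Fin n → ℝ) (f : Fin n → ℝ) : ℝ :=
  (1 / 2 : ℝ) * ∑ u, ∑ v, w u v * (f u - f v) ^ 2

/-- Rayleigh quotient of `f`. -/
noncomputable def rayleigh (w : Fin n → Fin n → ℝ) (f : Fin n → ℝ) : ℝ :=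
  energy w f / normWsq w f

/-- Signless energy `∑_{{u,v} ∈ E} w(u,v) (f(u)+f(v))²`. -/
def signEnergy (w : Fin n → Fin n → ℝ) (f : Fin n → ℝ) : ℝ :=
  (1 / 2 : ℝ) * ∑ u, ∑ v, w u v * (f u + f v) ^ 2

/-- Signless Rayleigh quotient `R⁺(f)`. -/
noncomputable def rayleighP (w : Fin n → Fin n → ℝ) (f : Fin n → ℝ) : ℝ :=
  signEnergy w f / normWsq w f

/-- Normalized Laplacian `𝓛 = I - D^{-1/2} A D^{-1/2}`. -/
noncomputable def normLap (w : Fin n → Fin n → ℝ) : Matrix (Fin n) (Fin n) ℝ :=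
  Matrix.of fun u v =>
    (if u = v then (1 : ℝ) else 0) - w u v / (Real.sqrt (deg w u) * Real.sqrt (deg w v))

/-- Signless normalized Laplacian `𝓜 = I + D^{-1/2} A D^{-1/2}`. -/
noncomputable def signLap (w : Fin n → Fin n → ℝ) : Matrix (Fin n) (Fin n) ℝ :=
  Matrix.of fun u v =>
    (if u = v then (1 : ℝ) else 0) + w u v / (Real.sqrt (deg w u) * Real.sqrt (deg w v))

/-- The `k`-th smallest eigenvalue of a Hermitian matrix (1-based index `k`). -/
noncomputable def sortedEig {A : Matrix (Fin n) (Fin n) ℝ} (hA : A.IsHermitian) (k : ℕ) : ℝ :=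
  if h : k - 1 < n then hA.eigenvalues (Tuple.sort hA.eigenvalues ⟨k - 1, h⟩) else 0

/-- Threshold set `V_f(t) = {v : f(v) ≥ t}`. -/
noncomputable def thresholdSet (f : Fin n → ℝ) (t : ℝ) : Finset (Fin n) :=
  Finset.univ.filter fun v => t ≤ f v

/-- `φ(f)`: best conductance among threshold sets of `f` that are nonempty and proper. -/
noncomputable def phiF (w : Fin n → Fin n → ℝ) (f : Fin n → ℝ) : ℝ :=
  sInf { x | ∃ t : ℝ, (thresholdSet f t).Nonempty ∧ thresholdSet f t ≠ Finset.univ ∧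
      x = conductance w (thresholdSet f t) }

/-- Support of a function, as a finset. -/
noncomputable def supp (f : Fin n → ℝ) : Finset (Fin n) :=
  Finset.univ.filter fun v => f v ≠ 0

/-- `L_f(t) = {v : f(v) ≤ -t}`. -/
noncomputable def Lset (f : Fin n → ℝ) (t : ℝ) : Finset (Fin n) :=
  Finset.univ.filter fun v => f v ≤ -t

/-- `R_f(t) = {v : f(v) ≥ t}`. -/
noncomputable def Rset (f : Fin n → ℝ) (t : ℝ) : Finset (Fin n) :=
  Finset.univ.filter fun v => t ≤ f v

/-- Bipartiteness ratio of an induced cut `(L,R)` (for disjoint `L`, `R`). -/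
noncomputable def biRatio (w : Fin n → Fin n → ℝ) (L R : Finset (Fin n)) : ℝ :=
  (cutWeight w L L + cutWeight w R R + cutWeight w (L ∪ R) (L ∪ R)ᶜ) / vol w (L ∪ R)

/-- `β(f)`: best bipartiteness ratio among threshold cuts of `f`. -/
noncomputable def betaF (w : Fin n → Fin n → ℝ) (f : Fin n → ℝ) : ℝ :=
  sInf { x | ∃ t : ℝ, 0 < t ∧ (Lset f t ∪ Rset f t).Nonempty ∧
      x = biRatio w (Lset f t) (Rset f t) }

/-- `β(G)`: minimum bipartiteness ratio over all induced cuts. -/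
noncomputable def minBeta (w : Fin n → Fin n → ℝ) : ℝ :=
  sInf { x | ∃ L R : Finset (Fin n), Disjoint L R ∧ (L ∪ R).Nonempty ∧ x = biRatio w L R }

/-- Energy of `f` restricted to the interval `(b,a]`:
`∑_{{u,v} ∈ E} w(u,v) · len((b,a] ∩ [f(u),f(v)])²`. -/
def intervalEnergy (w : Fin n → Fin n → ℝ) (f : Fin n → ℝ) (b a : ℝ) : ℝ :=
  (1 / 2 : ℝ) * ∑ u, ∑ v,
    w u v * max 0 (min a (max (f u) (f v)) - max b (min (f u) (f v))) ^ 2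

/-- The relative distance `dist(x,R) = inf_{y ∈ R} |x-y|/y` from a point to a region. -/
noncomputable def regionDist (x : ℝ) (R : Set ℝ) : ℝ :=
  sInf ((fun y => |x - y| / y) '' R)

/-- `g` is a `(2k+1)`-step approximation of `f`: there are thresholds
`0 = t₀ ≤ t₁ ≤ … ≤ t_{2k}` and `g(v)` is a threshold closest to `f(v)`. -/
def IsStepApprox (f g : Fin n → ℝ) (k : ℕ) : Prop :=
  ∃ t : Fin (2 * k + 1) → ℝ, t 0 = 0 ∧ Monotone t ∧
    ∀ v, (∃ i, g v = t i) ∧ ∀ i, |f v - g v| ≤ |f v - t i|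

/-- `g` is a symmetric `(2k+1)`-step approximation of `f`: there are thresholds
`0 = t₀ ≤ t₁ ≤ … ≤ t_{2k}` and `g(v)` is a value among `{±t_i}` closest to `f(v)`. -/
def IsSymStepApprox (f g : Fin n → ℝ) (k : ℕ) : Prop :=
  ∃ t : Fin (2 * k + 1) → ℝ, t 0 = 0 ∧ Monotone t ∧
    ∀ v, (∃ i, g v = t i ∨ g v = -t i) ∧
      ∀ i, |f v - g v| ≤ |f v - t i| ∧ |f v - g v| ≤ |f v + t i|

/-- Edge weights of the induced subgraph on `U`. -/
def inducedW (w : Fin n → Fin n → ℝ) (U : Finset (Fin n)) : Fin n → Fin n → ℝ :=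
  fun u v => if u ∈ U ∧ v ∈ U then w u v else 0

/-- Uncutness `γ(L,R) = w(E(L)) + w(E(R)) + w(E(L∪R, complement))`. -/
noncomputable def uncut (w : Fin n → Fin n → ℝ) (L R : Finset (Fin n)) : ℝ :=
  (1 / 2 : ℝ) * cutWeight w L L + (1 / 2 : ℝ) * cutWeight w R R +
    cutWeight w (L ∪ R) (L ∪ R)ᶜ

-- helpers
lemma deg_pos (w : Fin n → Fin n → ℝ) (hdeg : ∀ v, 1 ≤ deg w v) (v : Fin n) :
    0 < deg w v := lt_of_lt_of_le one_pos (hdeg v)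

lemma sqrtdeg_pos (w : Fin n → Fin n → ℝ) (hdeg : ∀ v, 1 ≤ deg w v) (v : Fin n) :
    0 < Real.sqrt (deg w v) := Real.sqrt_pos.mpr (deg_pos w hdeg v)

lemma sq_sqrtdeg (w : Fin n → Fin n → ℝ) (hdeg : ∀ v, 1 ≤ deg w v) (v : Fin n) :
    Real.sqrt (deg w v) * Real.sqrt (deg w v) = deg w v :=
  Real.mul_self_sqrt (le_of_lt (deg_pos w hdeg v))

lemma energy_eq (w : Fin n → Fin n → ℝ) (hsym : ∀ u v, w u v = w v u) (a : Fin n → ℝ) :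
    energy w a = ∑ u, deg w u * a u ^ 2 - ∑ u, ∑ v, w u v * (a u * a v) := by
  have key : ∀ u v, w u v * (a u - a v) ^ 2
      = w u v * a u ^ 2 + w u v * a v ^ 2 - 2 * (w u v * (a u * a v)) := by
    intro u v; ring
  have h1 : ∑ u, ∑ v, w u v * a u ^ 2 = ∑ u, deg w u * a u ^ 2 := by
    refine Finset.sum_congr rfl fun u _ => ?_
    rw [← Finset.sum_mul, deg]
  have h2 : ∑ u, ∑ v, w u v * a v ^ 2 = ∑ u, deg w u * a u ^ 2 := by
    rw [Finset.sum_comm]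
    refine Finset.sum_congr rfl fun v _ => ?_
    rw [← Finset.sum_mul, deg]
    congr 1
    exact Finset.sum_congr rfl fun u _ => hsym u v
  have expand1 : ∀ u, ∑ v, w u v * (a u - a v) ^ 2
      = ∑ v, w u v * a u ^ 2 + ∑ v, w u v * a v ^ 2 - 2 * ∑ v, w u v * (a u * a v) := by
    intro u
    rw [Finset.mul_sum, ← Finset.sum_add_distrib, ← Finset.sum_sub_distrib]
    exact Finset.sum_congr rfl fun v _ => key u v
  have expand : ∑ u, ∑ v, w u v * (a u - a v) ^ 2
      = (∑ u, ∑ v, w u v * a u ^ 2) + (∑ u, ∑ v, w u v * a v ^ 2)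
        - 2 * ∑ u, ∑ v, w u v * (a u * a v) := by
    rw [Finset.sum_congr rfl fun u _ => expand1 u, Finset.sum_sub_distrib,
      Finset.sum_add_distrib, ← Finset.mul_sum]
  rw [energy, expand, h1, h2]; ring

lemma energy_nonneg (w : Fin n → Fin n → ℝ) (hnn : ∀ u v, 0 ≤ w u v) (a : Fin n → ℝ) :
    0 ≤ energy w a := by
  apply mul_nonneg (by norm_num)
  exact Finset.sum_nonneg fun u _ => Finset.sum_nonneg fun v _ =>
    mul_nonneg (hnn u v) (sq_nonneg _)

lemma energy_neg (w : Fin n → Fin n → ℝ) (a : Fin n → ℝ) :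
    energy w (fun v => -a v) = energy w a := by
  rw [energy, energy]
  congr 1
  refine Finset.sum_congr rfl fun u _ => Finset.sum_congr rfl fun v _ => ?_
  ring

lemma normWsq_neg (w : Fin n → Fin n → ℝ) (a : Fin n → ℝ) :
    normWsq w (fun v => -a v) = normWsq w a := by
  rw [normWsq, normWsq]
  exact Finset.sum_congr rfl fun v _ => by ring

lemma normWsq_pos (w : Fin n → Fin n → ℝ) (hdeg : ∀ v, 1 ≤ deg w v) (a : Fin n → ℝ)
    {v₀ : Fin n} (h0 : a v₀ ≠ 0) : 0 < normWsq w a := by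
  rw [normWsq]
  refine Finset.sum_pos' (fun v _ => mul_nonneg (le_of_lt (deg_pos w hdeg v)) (sq_nonneg _)) ?_
  exact ⟨v₀, Finset.mem_univ _, mul_pos (deg_pos w hdeg v₀) (by positivity)⟩

lemma main_core (w : Fin n → Fin n → ℝ)
    (hsym : ∀ u v, w u v = w v u) (hnn : ∀ u v, 0 ≤ w u v)
    (hdeg : ∀ v, 1 ≤ deg w v) (f : Fin n → ℝ) (lam : ℝ)
    (heig : ∀ u, deg w u * f u - ∑ v, w u v * f v = lam * (deg w u * f u))
    {v₀ : Fin n} (hv₀ : 0 < f v₀) :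
    rayleigh w (fun v => max (f v) 0) ≤ lam := by
  set p : Fin n → ℝ := fun v => max (f v) 0 with hp
  have hpf : ∀ v, p v * f v = p v ^ 2 := by
    intro v; rcases le_total (f v) 0 with h | h
    · simp [hp, max_eq_right h]
    · have : p v = f v := max_eq_left h
      rw [this]; ring
  have hA : ∑ u, p u * (deg w u * f u - ∑ v, w u v * f v) = lam * normWsq w p := by
    rw [normWsq, Finset.mul_sum]
    refine Finset.sum_congr rfl fun u _ => ?_
    rw [heig u]
    linear_combination (lam * deg w u) * hpf u
  have hB : ∑ u, p u * (deg w u * f u - ∑ v, w u v * f v)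
      = ∑ u, deg w u * p u ^ 2 - ∑ u, ∑ v, w u v * (p u * f v) := by
    rw [← Finset.sum_sub_distrib]
    refine Finset.sum_congr rfl fun u _ => ?_
    rw [mul_sub, Finset.mul_sum]
    congr 1
    · rw [show p u * (deg w u * f u) = deg w u * (p u * f u) by ring, hpf u]
    · exact Finset.sum_congr rfl fun v _ => by ring
  have hE : energy w p ≤ lam * normWsq w p := by
    rw [energy_eq w hsym p, ← hA, hB]
    apply sub_le_sub_left
    refine Finset.sum_le_sum fun u _ => Finset.sum_le_sum fun v _ => ?_
    refine mul_le_mul_of_nonneg_left ?_ (hnn u v)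
    exact mul_le_mul_of_nonneg_left (le_max_left _ _) (le_max_right _ _)
  have hnorm : 0 < normWsq w p := by
    refine normWsq_pos w hdeg p (v₀ := v₀) ?_
    have : p v₀ = f v₀ := max_eq_left (le_of_lt hv₀)
    rw [this]; exact ne_of_gt hv₀
  rw [rayleigh, div_le_iff₀ hnorm]
  linarith

lemma energy_max_zero (w : Fin n → Fin n → ℝ)
    (hnn : ∀ u v, 0 ≤ w u v) (f : Fin n → ℝ) (hE : energy w f = 0) :
    energy w (fun v => max (f v) 0) = 0 := by
  have hle : energy w (fun v => max (f v) 0) ≤ energy w f := by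
    rw [energy, energy]
    refine mul_le_mul_of_nonneg_left ?_ (by norm_num)
    refine Finset.sum_le_sum fun u _ => Finset.sum_le_sum fun v _ => ?_
    refine mul_le_mul_of_nonneg_left ?_ (hnn u v)
    have h1 : |max (f u) 0 - max (f v) 0| ≤ |f u - f v| := abs_max_sub_max_le_abs _ _ _
    calc (max (f u) 0 - max (f v) 0) ^ 2 = |max (f u) 0 - max (f v) 0| ^ 2 := (sq_abs _).symm
      _ ≤ |f u - f v| ^ 2 := by
          exact pow_le_pow_left₀ (abs_nonneg _) h1 2
      _ = (f u - f v) ^ 2 := sq_abs _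
  have hge := energy_nonneg w hnn (fun v => max (f v) 0)
  linarith

lemma normLap_symm (w : Fin n → Fin n → ℝ) (hsym : ∀ u v, w u v = w v u) (u v : Fin n) :
    normLap w u v = normLap w v u := by
  simp only [normLap, Matrix.of_apply]
  rw [hsym u v, mul_comm]
  congr 1
  by_cases h : u = v
  · subst h; rfl
  · rw [if_neg h, if_neg (Ne.symm h)]

lemma dot_mulVec_symm (w : Fin n → Fin n → ℝ) (hsym : ∀ u v, w u v = w v u)
    (x y : Fin n → ℝ) :
    x ⬝ᵥ (normLap w *ᵥ y) = y ⬝ᵥ (normLap w *ᵥ x) := by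
  simp only [dotProduct, Matrix.mulVec, Finset.mul_sum]
  rw [Finset.sum_comm]
  refine Finset.sum_congr rfl fun u _ => Finset.sum_congr rfl fun v _ => ?_
  rw [normLap_symm w hsym v u]
  ring

lemma mulVec_sqrtdeg (w : Fin n → Fin n → ℝ) (hdeg : ∀ v, 1 ≤ deg w v) :
    normLap w *ᵥ (fun v => Real.sqrt (deg w v)) = 0 := by
  funext u
  simp only [Matrix.mulVec, dotProduct, normLap, Matrix.of_apply, Pi.zero_apply]
  have h1 : ∀ v, ((if u = v then (1:ℝ) else 0)
        - w u v / (Real.sqrt (deg w u) * Real.sqrt (deg w v))) * Real.sqrt (deg w v)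
      = (if u = v then (1:ℝ) else 0) * Real.sqrt (deg w v)
        - w u v / Real.sqrt (deg w u) := by
    intro v
    rw [sub_mul]
    congr 1
    rw [div_mul_eq_mul_div, mul_comm (Real.sqrt (deg w u)) (Real.sqrt (deg w v)),
      ← div_div, mul_div_assoc, div_self (ne_of_gt (sqrtdeg_pos w hdeg v)), mul_one]
  rw [Finset.sum_congr rfl fun v _ => h1 v, Finset.sum_sub_distrib]
  have h2 : ∑ v, (if u = v then (1:ℝ) else 0) * Real.sqrt (deg w v)
      = Real.sqrt (deg w u) := by
    simp only [ite_mul, one_mul, zero_mul, Finset.sum_ite_eq, Finset.mem_univ, if_true]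
  have h3 : ∑ v, w u v / Real.sqrt (deg w u) = Real.sqrt (deg w u) := by
    rw [← Finset.sum_div]
    rw [show (∑ v, w u v) = deg w u from rfl]
    rw [eq_comm, eq_div_iff (ne_of_gt (sqrtdeg_pos w hdeg u)), sq_sqrtdeg w hdeg u]
  rw [h2, h3, sub_self]

lemma dot_normLap (w : Fin n → Fin n → ℝ) (hsym : ∀ u v, w u v = w v u)
    (hdeg : ∀ v, 1 ≤ deg w v) (x : Fin n → ℝ) :
    x ⬝ᵥ (normLap w *ᵥ x) = energy w (fun v => x v / Real.sqrt (deg w v)) := by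
  rw [energy_eq w hsym]
  simp only [dotProduct, Matrix.mulVec, normLap, Matrix.of_apply]
  have h1 : ∀ u, x u * (∑ v, ((if u = v then (1:ℝ) else 0)
        - w u v / (Real.sqrt (deg w u) * Real.sqrt (deg w v))) * x v)
      = x u ^ 2 - ∑ v, w u v * (x u / Real.sqrt (deg w u) * (x v / Real.sqrt (deg w v))) := by
    intro u
    rw [Finset.sum_congr rfl fun v _ => sub_mul ((if u = v then (1:ℝ) else 0)) _ (x v),
      Finset.sum_sub_distrib, mul_sub, Finset.mul_sum]
    congr 1
    · simp only [mul_ite, ite_mul, one_mul, mul_one, mul_zero, zero_mul,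
        Finset.sum_ite_eq, Finset.mem_univ, if_true, sq]
    · rw [Finset.mul_sum]
      refine Finset.sum_congr rfl fun v _ => ?_
      field_simp
  rw [Finset.sum_congr rfl fun u _ => h1 u, Finset.sum_sub_distrib]
  congr 1
  refine Finset.sum_congr rfl fun u _ => ?_
  rw [div_pow, show Real.sqrt (deg w u) ^ 2 = deg w u from by
    rw [sq]; exact sq_sqrtdeg w hdeg u]
  rw [mul_div_cancel₀ _ (ne_of_gt (deg_pos w hdeg u))]

/-- There are disjointly supported `f₊ ≥ 0` and `f₋ ≤ 0`
with Rayleigh quotients at most `λ₂`. -/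
theorem exists_disjoint_pos_neg
    (hn : 2 ≤ n) (w : Fin n → Fin n → ℝ)
    (hsym : ∀ u v, w u v = w v u) (hnn : ∀ u v, 0 ≤ w u v)
    (hloop : ∀ v, w v v = 0) (hdeg : ∀ v, 1 ≤ deg w v)
    (hH : (normLap w).IsHermitian) :
    ∃ fp fm : Fin n → ℝ, fp ≠ 0 ∧ fm ≠ 0 ∧
      (∀ v, 0 ≤ fp v) ∧ (∀ v, fm v ≤ 0) ∧
      (∀ v, fp v = 0 ∨ fm v = 0) ∧
      rayleigh w fp ≤ sortedEig hH 2 ∧ rayleigh w fm ≤ sortedEig hH 2 := by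
  have h1n : (1 : ℕ) < n := hn
  have h0n : (0 : ℕ) < n := by omega
  set i₀ : Fin n := Tuple.sort hH.eigenvalues ⟨1, h1n⟩ with hi₀
  set j₀ : Fin n := Tuple.sort hH.eigenvalues ⟨0, h0n⟩ with hj₀
  set lam : ℝ := hH.eigenvalues i₀ with hlamdef
  have hsE : sortedEig hH 2 = lam := by
    rw [sortedEig, dif_pos (show 2 - 1 < n from h1n)]
  -- combinatorial eigen-equation extraction
  have hceig : ∀ (x : Fin n → ℝ) (μ : ℝ), normLap w *ᵥ x = μ • x →
      ∀ u, deg w u * (x u / Real.sqrt (deg w u))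
          - ∑ v, w u v * (x v / Real.sqrt (deg w v))
        = μ * (deg w u * (x u / Real.sqrt (deg w u))) := by
    intro x μ hx u
    have h := congrFun hx u
    simp only [Matrix.mulVec, dotProduct, normLap, Matrix.of_apply, Pi.smul_apply,
      smul_eq_mul] at h
    have h2 : x u - ∑ v, w u v / (Real.sqrt (deg w u) * Real.sqrt (deg w v)) * x v
        = μ * x u := by
      rw [← h, Finset.sum_congr rfl fun v _ => sub_mul (if u = v then (1 : ℝ) else 0) _ (x v),
        Finset.sum_sub_distrib]
      congr 1
      simp only [ite_mul, one_mul, zero_mul, Finset.sum_ite_eq, Finset.mem_univ, if_true]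
    have hsu : Real.sqrt (deg w u) ≠ 0 := ne_of_gt (sqrtdeg_pos w hdeg u)
    have hd : deg w u * (x u / Real.sqrt (deg w u)) = Real.sqrt (deg w u) * x u := by
      rw [← sq_sqrtdeg w hdeg u]
      field_simp
      rw [Real.sqrt_sq (sqrtdeg_pos w hdeg u).le]
      ring
    have hsum : ∑ v, w u v * (x v / Real.sqrt (deg w v))
        = Real.sqrt (deg w u)
          * ∑ v, w u v / (Real.sqrt (deg w u) * Real.sqrt (deg w v)) * x v := by
      rw [Finset.mul_sum]
      refine Finset.sum_congr rfl fun v _ => ?_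
      have hsv : Real.sqrt (deg w v) ≠ 0 := ne_of_gt (sqrtdeg_pos w hdeg v)
      field_simp
    rw [hd, hsum]
    linear_combination Real.sqrt (deg w u) * h2
  -- both signs from weighted-sum zero
  have hpos : ∀ f : Fin n → ℝ, (∑ v, deg w v * f v) = 0 → ∀ v₀, f v₀ ≠ 0 →
      ∃ vp, 0 < f vp := by
    intro f hsum v₀ h0
    by_contra hcon
    push_neg at hcon
    have hz := (Finset.sum_eq_zero_iff_of_nonpos
      (fun v _ => mul_nonpos_iff.mpr (Or.inl ⟨(deg_pos w hdeg v).le, hcon v⟩))).mp hsum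
    have := hz v₀ (Finset.mem_univ v₀)
    rcases mul_eq_zero.mp this with h | h
    · exact absurd h (ne_of_gt (deg_pos w hdeg v₀))
    · exact h0 h
  have hsigns : ∀ f : Fin n → ℝ, (∑ v, deg w v * f v) = 0 → ∀ v₀, f v₀ ≠ 0 →
      (∃ vp, 0 < f vp) ∧ (∃ vm, f vm < 0) := by
    intro f hsum v₀ h0
    refine ⟨hpos f hsum v₀ h0, ?_⟩
    have hsum' : (∑ v, deg w v * (-f v)) = 0 := by
      rw [← neg_eq_zero, ← Finset.sum_neg_distrib]
      rw [← hsum]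
      exact Finset.sum_congr rfl fun v _ => by ring
    obtain ⟨vm, hvm⟩ := hpos (fun v => -f v) hsum' v₀ (by simpa using h0)
    exact ⟨vm, by linarith⟩
  -- norms of eigenvectors
  have hnorm1 : ∀ i : Fin n,
      (∑ v, hH.eigenvectorBasis i v * hH.eigenvectorBasis i v) = 1 := by
    intro i
    have h := orthonormal_iff_ite.mp hH.eigenvectorBasis.orthonormal i i
    rw [if_pos rfl] at h
    rw [← h]
    simp only [PiLp.inner_apply, RCLike.inner_apply, conj_trivial, mul_comm]
  have hexnz : ∀ i : Fin n, ∃ v₀, hH.eigenvectorBasis i v₀ ≠ 0 := by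
    intro i
    by_contra hcon
    push_neg at hcon
    have := hnorm1 i
    rw [Finset.sum_eq_zero (fun v _ => by rw [hcon v, mul_zero])] at this
    norm_num at this
  -- the main reduction
  suffices key : ∃ f : Fin n → ℝ, (∃ vp, 0 < f vp) ∧ (∃ vm, f vm < 0) ∧
      rayleigh w (fun v => max (f v) 0) ≤ lam ∧
      rayleigh w (fun v => max (-f v) 0) ≤ lam by
    obtain ⟨f, ⟨vp, hvp⟩, ⟨vm, hvm⟩, hRp, hRm⟩ := key
    have hmin : (fun v => min (f v) 0) = fun v => -(max (-f v) 0) := by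
      funext v
      rcases le_total (f v) 0 with h | h
      · rw [min_eq_left h, max_eq_left (neg_nonneg.mpr h), neg_neg]
      · rw [min_eq_right h, max_eq_right (neg_nonpos.mpr h), neg_zero]
    refine ⟨fun v => max (f v) 0, fun v => min (f v) 0, ?_, ?_, ?_, ?_, ?_, ?_, ?_⟩
    · intro hcon
      have := congrFun hcon vp
      simp only [Pi.zero_apply] at this
      rw [max_eq_left hvp.le] at this
      exact absurd this (ne_of_gt hvp)
    · intro hcon
      have := congrFun hcon vm
      simp only [Pi.zero_apply] at this
      rw [min_eq_left hvm.le] at this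
      exact absurd this (ne_of_lt hvm)
    · exact fun v => le_max_right _ _
    · exact fun v => min_le_right _ _
    · intro v
      rcases le_total (f v) 0 with h | h
      · exact Or.inl (max_eq_right h)
      · exact Or.inr (min_eq_right h)
    · rw [hsE]; exact hRp
    · rw [hsE, hmin]
      have : rayleigh w (fun v => -(max (-f v) 0)) = rayleigh w (fun v => max (-f v) 0) := by
        rw [rayleigh, rayleigh, energy_neg, normWsq_neg]
      rw [this]
      exact hRm
  -- construct f in the two cases
  rcases eq_or_ne lam 0 with hlam0 | hlam0
  · -- lam = 0 : use a kernel vector orthogonal to sqrt(deg)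
    have hj : hH.eigenvalues j₀ ≤ lam := by
      have := Tuple.monotone_sort hH.eigenvalues
        (show (⟨0, h0n⟩ : Fin n) ≤ ⟨1, h1n⟩ from by norm_num)
      simpa using this
    have hj0 : 0 ≤ hH.eigenvalues j₀ := by
      have h1 := dot_normLap w hsym hdeg (⇑(hH.eigenvectorBasis j₀))
      have h2 : (⇑(hH.eigenvectorBasis j₀) : Fin n → ℝ)
          ⬝ᵥ (normLap w *ᵥ ⇑(hH.eigenvectorBasis j₀)) = hH.eigenvalues j₀ := by
        rw [hH.mulVec_eigenvectorBasis j₀, dotProduct_smul, smul_eq_mul]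
        rw [show ((⇑(hH.eigenvectorBasis j₀) : Fin n → ℝ)
          ⬝ᵥ ⇑(hH.eigenvectorBasis j₀)) = 1 from hnorm1 j₀, mul_one]
      rw [h2] at h1
      rw [h1]
      exact energy_nonneg w hnn _
    have hl1 : hH.eigenvalues j₀ = 0 := le_antisymm (by rw [← hlam0]; exact hj) hj0
    have hij : j₀ ≠ i₀ := by
      intro hcon
      have := (Tuple.sort hH.eigenvalues).injective (hj₀ ▸ hi₀ ▸ hcon)
      simp at this
    have hn12 : (∑ v, hH.eigenvectorBasis j₀ v * hH.eigenvectorBasis i₀ v) = 0 := by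
      have h := orthonormal_iff_ite.mp hH.eigenvectorBasis.orthonormal j₀ i₀
      rw [if_neg hij] at h
      rw [← h]
      simp [PiLp.inner_apply, RCLike.inner_apply, starRingEnd_apply, mul_comm]
    set c1 : ℝ := ∑ v, Real.sqrt (deg w v) * hH.eigenvectorBasis j₀ v with hc1
    set c2 : ℝ := ∑ v, Real.sqrt (deg w v) * hH.eigenvectorBasis i₀ v with hc2
    obtain ⟨a, b, habpos, habortho⟩ :
        ∃ a b : ℝ, 0 < a ^ 2 + b ^ 2 ∧ a * c1 + b * c2 = 0 := by
      by_cases hc : c1 = 0 ∧ c2 = 0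
      · exact ⟨1, 0, by norm_num, by rw [hc.1, hc.2]; ring⟩
      · refine ⟨c2, -c1, ?_, by ring⟩
        rcases (not_and_or.mp hc) with h | h
        · have h1 : 0 < c1 ^ 2 := by positivity
          nlinarith [sq_nonneg c2]
        · have h2 : 0 < c2 ^ 2 := by positivity
          nlinarith [sq_nonneg c1]
    set hv : Fin n → ℝ :=
      fun v => a * hH.eigenvectorBasis j₀ v + b * hH.eigenvectorBasis i₀ v with hhv
    have hvsmul : hv = a • (⇑(hH.eigenvectorBasis j₀) : Fin n → ℝ)
        + b • ⇑(hH.eigenvectorBasis i₀) := rfl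
    have hLh : normLap w *ᵥ hv = 0 := by
      rw [hvsmul, Matrix.mulVec_add, Matrix.mulVec_smul, Matrix.mulVec_smul,
        hH.mulVec_eigenvectorBasis j₀, hH.mulVec_eigenvectorBasis i₀, hl1, ← hlamdef, hlam0]
      simp
    set f : Fin n → ℝ := fun v => hv v / Real.sqrt (deg w v) with hf
    have hEf : energy w f = 0 := by
      have := dot_normLap w hsym hdeg hv
      rw [hLh, dotProduct_zero] at this
      rw [hf, ← this]
    have hhnorm : (∑ v, hv v * hv v) = a ^ 2 + b ^ 2 := by
      have : ∀ v, hv v * hv v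
          = a ^ 2 * (hH.eigenvectorBasis j₀ v * hH.eigenvectorBasis j₀ v)
            + (2 * a * b) * (hH.eigenvectorBasis j₀ v * hH.eigenvectorBasis i₀ v)
            + b ^ 2 * (hH.eigenvectorBasis i₀ v * hH.eigenvectorBasis i₀ v) := by
        intro v
        simp only [hhv]
        ring
      rw [Finset.sum_congr rfl fun v _ => this v, Finset.sum_add_distrib,
        Finset.sum_add_distrib, ← Finset.mul_sum, ← Finset.mul_sum, ← Finset.mul_sum,
        hnorm1 j₀, hnorm1 i₀, hn12]
      ring
    have hfnz : ∃ v₀, f v₀ ≠ 0 := by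
      by_contra hcon
      push_neg at hcon
      have hhz : ∀ v, hv v = 0 := by
        intro v
        have := hcon v
        rw [hf] at this
        simp only at this
        rcases div_eq_zero_iff.mp this with h | h
        · exact h
        · exact absurd h (ne_of_gt (sqrtdeg_pos w hdeg v))
      rw [Finset.sum_eq_zero (fun v _ => by rw [hhz v, mul_zero])] at hhnorm
      nlinarith
    have hortho : (∑ v, deg w v * f v) = 0 := by
      have h1 : ∀ v, deg w v * f v = Real.sqrt (deg w v) * hv v := by
        intro v
        rw [hf]
        simp only
        have hsv : Real.sqrt (deg w v) ≠ 0 := ne_of_gt (sqrtdeg_pos w hdeg v)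
        rw [← sq_sqrtdeg w hdeg v]
        field_simp
        rw [Real.sqrt_sq (sqrtdeg_pos w hdeg v).le]
        ring
      rw [Finset.sum_congr rfl fun v _ => h1 v]
      have h2 : ∀ v, Real.sqrt (deg w v) * hv v
          = a * (Real.sqrt (deg w v) * hH.eigenvectorBasis j₀ v)
            + b * (Real.sqrt (deg w v) * hH.eigenvectorBasis i₀ v) := by
        intro v
        simp only [hhv]
        ring
      rw [Finset.sum_congr rfl fun v _ => h2 v, Finset.sum_add_distrib, ← Finset.mul_sum,
        ← Finset.mul_sum, ← hc1, ← hc2]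
      exact habortho
    obtain ⟨v₀, hv₀⟩ := hfnz
    obtain ⟨⟨vp, hvp⟩, ⟨vm, hvm⟩⟩ := hsigns f hortho v₀ hv₀
    have hRp : rayleigh w (fun v => max (f v) 0) ≤ lam := by
      rw [rayleigh, energy_max_zero w hnn f hEf, zero_div, hlam0]
    have hRm : rayleigh w (fun v => max (-f v) 0) ≤ lam := by
      have hEf' : energy w (fun v => -f v) = 0 := by rw [energy_neg]; exact hEf
      rw [rayleigh, energy_max_zero w hnn (fun v => -f v) hEf', zero_div, hlam0]
    exact ⟨f, ⟨vp, hvp⟩, ⟨vm, hvm⟩, hRp, hRm⟩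
  · -- lam ≠ 0 : eigenvector of lam is orthogonal to sqrt(deg)
    have hgeig := hH.mulVec_eigenvectorBasis i₀
    set f : Fin n → ℝ := fun v => hH.eigenvectorBasis i₀ v / Real.sqrt (deg w v) with hf
    have heig := hceig (⇑(hH.eigenvectorBasis i₀)) lam hgeig
    have heigf : ∀ u, deg w u * f u - ∑ v, w u v * f v = lam * (deg w u * f u) := heig
    have hdot : lam * ((fun v => Real.sqrt (deg w v)) ⬝ᵥ ⇑(hH.eigenvectorBasis i₀)) = 0 := by
      have h1 : (fun v => Real.sqrt (deg w v)) ⬝ᵥ (normLap w *ᵥ ⇑(hH.eigenvectorBasis i₀))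
          = lam * ((fun v => Real.sqrt (deg w v)) ⬝ᵥ ⇑(hH.eigenvectorBasis i₀)) := by
        rw [hgeig, dotProduct_smul, smul_eq_mul]
      have h2 := dot_mulVec_symm w hsym (fun v => Real.sqrt (deg w v)) ⇑(hH.eigenvectorBasis i₀)
      rw [mulVec_sqrtdeg w hdeg, dotProduct_zero] at h2
      rw [← h1, h2]
    have hd0 : (∑ v, Real.sqrt (deg w v) * hH.eigenvectorBasis i₀ v) = 0 := by
      rcases mul_eq_zero.mp hdot with h | h
      · exact absurd h hlam0
      · exact h
    have hortho : (∑ v, deg w v * f v) = 0 := by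
      rw [← hd0]
      refine Finset.sum_congr rfl fun v _ => ?_
      rw [hf]
      simp only
      have hsv : Real.sqrt (deg w v) ≠ 0 := ne_of_gt (sqrtdeg_pos w hdeg v)
      rw [← sq_sqrtdeg w hdeg v]
      field_simp
      rw [Real.sqrt_sq (sqrtdeg_pos w hdeg v).le]
      ring
    have hfnz : ∃ v₀, f v₀ ≠ 0 := by
      obtain ⟨v₀, hv₀⟩ := hexnz i₀
      exact ⟨v₀, div_ne_zero hv₀ (ne_of_gt (sqrtdeg_pos w hdeg v₀))⟩
    obtain ⟨v₀, hv₀⟩ := hfnz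
    obtain ⟨⟨vp, hvp⟩, ⟨vm, hvm⟩⟩ := hsigns f hortho v₀ hv₀
    have hRp : rayleigh w (fun v => max (f v) 0) ≤ lam :=
      main_core w hsym hnn hdeg f lam heig hvp
    have hRm : rayleigh w (fun v => max (-f v) 0) ≤ lam := by
      have heig' : ∀ u, deg w u * (-f u) - ∑ v, w u v * (-f v)
          = lam * (deg w u * (-f u)) := by
        intro u
        have hsn : ∑ v, w u v * (-f v) = -∑ v, w u v * f v := by
          rw [← Finset.sum_neg_distrib]
          exact Finset.sum_congr rfl fun v _ => by ring
        rw [hsn]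
        linear_combination -heigf u
      exact main_core w hsym hnn hdeg (fun v => -f v) lam heig' (v₀ := vm) (by simpa using hvm)
    exact ⟨f, ⟨vp, hvp⟩, ⟨vm, hvm⟩, hRp, hRm⟩


end

end CheegerHigher
end

section
/- Let h : V → ℝ be a nonzero nonnegative function with vol(supp(h)) ≤ vol(V)/2. Then φ(h) ≤ (Σ_{{u,v} ∈ E} w(u,v)·|h(u) − h(v)|) / (Σ_v w(v)·h(v)); in particular, there exists t > 0 such that V_h(t) is nonempty and φ(V_h(t)) is at most the right-hand side. -/
open scoped Classical

namespace CheegerHigher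

noncomputable section

variable {n : ℕ}

private lemma cut_nonneg (w : Fin n → Fin n → ℝ) (hnn : ∀ u v, 0 ≤ w u v)
    (S T : Finset (Fin n)) : 0 ≤ cutWeight w S T :=
  Finset.sum_nonneg fun u _ => Finset.sum_nonneg fun v _ => hnn u v

private lemma vol_nonneg (w : Fin n → Fin n → ℝ) (hdegnn : ∀ v, 0 ≤ deg w v)
    (S : Finset (Fin n)) : 0 ≤ vol w S :=
  Finset.sum_nonneg fun v _ => hdegnn v

private lemma key_ind (w : Fin n → Fin n → ℝ)
    (hdegnn : ∀ v, 0 ≤ deg w v) (φ : ℝ) (hφ : 0 ≤ φ) :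
    ∀ (m : ℕ) (h : Fin n → ℝ), (supp h).card ≤ m → (∀ v, 0 ≤ h v) →
      (∀ t : ℝ, 0 < t → (thresholdSet h t).Nonempty →
        φ * vol w (thresholdSet h t) ≤
          cutWeight w (thresholdSet h t) (thresholdSet h t)ᶜ) →
      φ * (∑ v, deg w v * h v) ≤ ∑ u, ∑ v, w u v * max 0 (h u - h v) := by
  intro m
  induction m with
  | zero =>
    intro h hcard hpos _
    have hzero : ∀ v, h v = 0 := by
      intro v
      by_contra hv
      have hmem : v ∈ supp h := by simp [supp, hv]
      have := Finset.card_pos.mpr ⟨v, hmem⟩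
      omega
    simp [hzero]
  | succ m ih =>
    intro h hcard hpos H
    by_cases hz : ∀ v, h v = 0
    · simp [hz]
    push_neg at hz
    obtain ⟨v0, hv0⟩ := hz
    have hsuppne : (supp h).Nonempty := ⟨v0, by simp [supp, hv0]⟩
    obtain ⟨v1, hv1mem, hv1min⟩ := Finset.exists_min_image (supp h) h hsuppne
    have hv1ne : h v1 ≠ 0 := by simpa [supp] using hv1mem
    set t0 := h v1 with ht0
    have ht0pos : 0 < t0 := lt_of_le_of_ne (hpos v1) (Ne.symm hv1ne)
    have hlow : ∀ v, h v ≠ 0 → t0 ≤ h v := fun v hv => hv1min v (by simp [supp, hv])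
    set g : Fin n → ℝ := fun v => max 0 (h v - t0) with hg
    have hcase : ∀ v, (h v = 0 ∧ g v = 0) ∨ (t0 ≤ h v ∧ g v = h v - t0) := by
      intro v
      by_cases hv : h v = 0
      · left
        refine ⟨hv, ?_⟩
        simp only [hg, hv]
        exact max_eq_left (by linarith)
      · right
        have := hlow v hv
        exact ⟨this, max_eq_right (by linarith)⟩
    have hgpos : ∀ v, 0 ≤ g v := fun v => le_max_left _ _
    have hgsub : supp g ⊂ supp h := by
      rw [Finset.ssubset_iff_of_subset]
      · refine ⟨v1, hv1mem, ?_⟩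
        simp only [supp, Finset.mem_filter, Finset.mem_univ, true_and, not_not]
        simp [hg]
        exact ht0.ge
      · intro v hv
        simp only [supp, Finset.mem_filter, Finset.mem_univ, true_and] at hv ⊢
        rcases hcase v with ⟨_, h2⟩ | ⟨h1, _⟩
        · exact absurd h2 hv
        · intro hc; rw [hc] at h1; linarith
    have hcardg : (supp g).card ≤ m := by
      have := Finset.card_lt_card hgsub
      omega
    have hth : ∀ s : ℝ, 0 < s → thresholdSet g s = thresholdSet h (s + t0) := by
      intro s hs
      ext v
      simp only [thresholdSet, Finset.mem_filter, Finset.mem_univ, true_and, hg]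
      constructor
      · intro hsv
        rcases le_max_iff.mp hsv with h1 | h1
        · linarith
        · linarith
      · intro hsv
        exact le_max_of_le_right (by linarith)
    have Hg : ∀ s : ℝ, 0 < s → (thresholdSet g s).Nonempty →
        φ * vol w (thresholdSet g s) ≤
          cutWeight w (thresholdSet g s) (thresholdSet g s)ᶜ := by
      intro s hs hne'
      rw [hth s hs] at hne' ⊢
      exact H (s + t0) (by linarith) hne'
    have hsuppth : supp h = thresholdSet h t0 := by
      ext v
      simp only [supp, thresholdSet, Finset.mem_filter, Finset.mem_univ, true_and]
      constructor
      · exact hlow v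
      · intro h1 h2; rw [h2] at h1; linarith
    have hD : ∑ v, deg w v * h v =
        t0 * vol w (supp h) + ∑ v, deg w v * g v := by
      have hpt : ∀ v, deg w v * h v =
          (if v ∈ supp h then deg w v * t0 else 0) + deg w v * g v := by
        intro v
        rcases hcase v with ⟨h1, h2⟩ | ⟨h1, h2⟩
        · have : v ∉ supp h := by simp [supp, h1]
          simp [this, h1, h2]
        · have hv : v ∈ supp h := by
            simp only [supp, Finset.mem_filter, Finset.mem_univ, true_and]
            intro hc; rw [hc] at h1; linarith
          rw [h2, if_pos hv]; ring
      rw [Finset.sum_congr rfl fun v _ => hpt v, Finset.sum_add_distrib]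
      congr 1
      rw [Finset.sum_ite_mem, Finset.univ_inter, vol, Finset.mul_sum]
      exact Finset.sum_congr rfl fun v _ => mul_comm _ _
    have hN : ∑ u, ∑ v, w u v * max 0 (h u - h v) =
        t0 * cutWeight w (supp h) (supp h)ᶜ +
          ∑ u, ∑ v, w u v * max 0 (g u - g v) := by
      have hpt : ∀ u v, w u v * max 0 (h u - h v) =
          (if u ∈ supp h ∧ v ∉ supp h then w u v * t0 else 0) +
            w u v * max 0 (g u - g v) := by
        intro u v
        have hmem : ∀ x, x ∈ supp h ↔ h x ≠ 0 := by
          intro x; simp [supp]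
        rcases hcase u with ⟨hu1, hu2⟩ | ⟨hu1, hu2⟩ <;>
          rcases hcase v with ⟨hv1, hv2⟩ | ⟨hv1, hv2⟩
        · simp [hmem, hu1, hv1, hu2, hv2]
        · have : u ∉ supp h := by simp [hmem, hu1]
          rw [if_neg (by tauto), hu1, hu2, hv2, zero_add,
            max_eq_left (by linarith), max_eq_left (by linarith)]
        · have h1 : u ∈ supp h := by
            rw [hmem]; intro hc; rw [hc] at hu1; linarith
          have h2 : v ∉ supp h := by simp [hmem, hv1]
          rw [if_pos ⟨h1, h2⟩, hu2, hv2, hv1]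
          rw [max_eq_right (by linarith), max_eq_right (by linarith)]
          ring
        · have h2 : v ∈ supp h := by
            rw [hmem]; intro hc; rw [hc] at hv1; linarith
          rw [if_neg (by tauto), hu2, hv2, zero_add]
          congr 2
          ring
      have e1 : ∑ u, ∑ v, w u v * max 0 (h u - h v)
          = (∑ u, ∑ v, (if u ∈ supp h ∧ v ∉ supp h then w u v * t0 else 0))
            + ∑ u, ∑ v, w u v * max 0 (g u - g v) := by
        rw [← Finset.sum_add_distrib]
        refine Finset.sum_congr rfl fun u _ => ?_
        rw [← Finset.sum_add_distrib]
        exact Finset.sum_congr rfl fun v _ => hpt u v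
      rw [e1]
      congr 1
      have e2 : ∀ u : Fin n, (∑ v, if u ∈ supp h ∧ v ∉ supp h then w u v * t0 else 0)
          = if u ∈ supp h then ∑ v ∈ (supp h)ᶜ, w u v * t0 else 0 := by
        intro u
        by_cases hu : u ∈ supp h
        · simp only [hu, true_and, if_true]
          have : ∀ v : Fin n, (if v ∉ supp h then w u v * t0 else 0)
              = if v ∈ (supp h)ᶜ then w u v * t0 else 0 := by
            intro v; simp [Finset.mem_compl]
          rw [Finset.sum_congr rfl fun v _ => this v, Finset.sum_ite_mem,
            Finset.univ_inter]
        · simp [hu]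
      rw [Finset.sum_congr rfl fun u _ => e2 u, Finset.sum_ite_mem, Finset.univ_inter,
        cutWeight, Finset.mul_sum]
      refine Finset.sum_congr rfl fun u _ => ?_
      rw [Finset.mul_sum]
      exact Finset.sum_congr rfl fun v _ => mul_comm _ _
    have hbot : φ * vol w (supp h) ≤ cutWeight w (supp h) (supp h)ᶜ := by
      rw [hsuppth]
      exact H t0 ht0pos ⟨v1, by rw [← hsuppth]; exact hv1mem⟩
    have hih := ih g hcardg hgpos Hg
    calc φ * (∑ v, deg w v * h v)
        = t0 * (φ * vol w (supp h)) + φ * (∑ v, deg w v * g v) := by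
          rw [hD]; ring
      _ ≤ t0 * cutWeight w (supp h) (supp h)ᶜ +
            ∑ u, ∑ v, w u v * max 0 (g u - g v) :=
          add_le_add (mul_le_mul_of_nonneg_left hbot ht0pos.le) hih
      _ = ∑ u, ∑ v, w u v * max 0 (h u - h v) := hN.symm

/-- Cheeger's inequality with Dirichlet boundary conditions:
`φ(h) ≤ (∑_{{u,v}∈E} w(u,v)|h(u)-h(v)|) / (∑_v w(v)h(v))`, witnessed by a
nonempty threshold set at some `t > 0`. -/
theorem dirichlet_cheeger
    (hn : 2 ≤ n) (w : Fin n → Fin n → ℝ)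
    (hsym : ∀ u v, w u v = w v u) (hnn : ∀ u v, 0 ≤ w u v)
    (hloop : ∀ v, w v v = 0) (hdeg : ∀ v, 1 ≤ deg w v)
    (h : Fin n → ℝ) (hne : h ≠ 0) (hhnn : ∀ v, 0 ≤ h v)
    (hsupp : vol w (supp h) ≤ vol w Finset.univ / 2) :
    phiF w h ≤
      ((1 / 2 : ℝ) * ∑ u, ∑ v, w u v * |h u - h v|) / (∑ v, deg w v * h v) ∧
    ∃ t : ℝ, 0 < t ∧ (thresholdSet h t).Nonempty ∧
      conductance w (thresholdSet h t) ≤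
        ((1 / 2 : ℝ) * ∑ u, ∑ v, w u v * |h u - h v|) / (∑ v, deg w v * h v) := by
  have hdegnn : ∀ v, 0 ≤ deg w v := fun v => le_trans zero_le_one (hdeg v)
  obtain ⟨v0, hv0⟩ : ∃ v, h v ≠ 0 := by
    by_contra hc; push_neg at hc; exact hne (funext hc)
  have hv0pos : 0 < h v0 := lt_of_le_of_ne (hhnn v0) (Ne.symm hv0)
  have hvolpos : ∀ S : Finset (Fin n), S.Nonempty → 0 < vol w S := by
    rintro S ⟨v, hv⟩
    exact Finset.sum_pos' (fun x _ => hdegnn x)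
      ⟨v, hv, lt_of_lt_of_le one_pos (hdeg v)⟩
  -- candidate thresholds
  set C : Finset ℝ := (Finset.univ.image h).filter (fun t => 0 < t) with hC
  have hCne : C.Nonempty := by
    refine ⟨h v0, ?_⟩
    simp only [hC, Finset.mem_filter, Finset.mem_image, Finset.mem_univ]
    exact ⟨⟨v0, trivial, rfl⟩, hv0pos⟩
  obtain ⟨tstar, htmem, htmin⟩ := Finset.exists_min_image C
    (fun t => cutWeight w (thresholdSet h t) (thresholdSet h t)ᶜ /
      vol w (thresholdSet h t)) hCne
  have htpos : 0 < tstar := (Finset.mem_filter.mp htmem).2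
  obtain ⟨vs, _, hvs⟩ : ∃ v ∈ Finset.univ, h v = tstar := by
    have := (Finset.mem_filter.mp htmem).1
    simpa [Finset.mem_image] using this
  have hTne : (thresholdSet h tstar).Nonempty :=
    ⟨vs, by simp [thresholdSet, hvs]⟩
  set S := thresholdSet h tstar with hS
  set φ := cutWeight w S Sᶜ / vol w S with hφdef
  have hφnn : 0 ≤ φ :=
    div_nonneg (cut_nonneg w hnn _ _) (vol_nonneg w hdegnn _)
  -- the minimality hypothesis for all positive thresholds
  have H : ∀ t : ℝ, 0 < t → (thresholdSet h t).Nonempty →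
      φ * vol w (thresholdSet h t) ≤
        cutWeight w (thresholdSet h t) (thresholdSet h t)ᶜ := by
    intro t ht hne'
    obtain ⟨v1, hv1mem, hv1min⟩ := Finset.exists_min_image (thresholdSet h t) h hne'
    have ht1 : t ≤ h v1 := by simpa [thresholdSet] using hv1mem
    have heq : thresholdSet h t = thresholdSet h (h v1) := by
      ext v
      simp only [thresholdSet, Finset.mem_filter, Finset.mem_univ, true_and]
      constructor
      · intro hv; exact hv1min v (by simp [thresholdSet, hv])
      · intro hv; linarith
    have hmemC : h v1 ∈ C := by
      simp only [hC, Finset.mem_filter, Finset.mem_image, Finset.mem_univ]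
      exact ⟨⟨v1, trivial, rfl⟩, lt_of_lt_of_le ht ht1⟩
    have hle := htmin (h v1) hmemC
    rw [heq]
    have hvp : 0 < vol w (thresholdSet h (h v1)) :=
      hvolpos _ (by rw [← heq]; exact hne')
    exact (le_div_iff₀ hvp).mp hle
  have hkey := key_ind w hdegnn φ hφnn (supp h).card h le_rfl hhnn H
  -- rewrite the numerator
  have habs : (1 / 2 : ℝ) * ∑ u, ∑ v, w u v * |h u - h v|
      = ∑ u, ∑ v, w u v * max 0 (h u - h v) := by
    have e : ∑ u, ∑ v, w u v * |h u - h v|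
        = ∑ u, ∑ v, w u v * max 0 (h u - h v)
          + ∑ u, ∑ v, w u v * max 0 (h v - h u) := by
      rw [← Finset.sum_add_distrib]
      refine Finset.sum_congr rfl fun u _ => ?_
      rw [← Finset.sum_add_distrib]
      refine Finset.sum_congr rfl fun v _ => ?_
      have habs1 : |h u - h v| = max 0 (h u - h v) + max 0 (h v - h u) := by
        rcases le_total (h v) (h u) with hle | hle
        · rw [abs_of_nonneg (by linarith), max_eq_right (by linarith),
            max_eq_left (by linarith)]; ring
        · rw [abs_of_nonpos (by linarith), max_eq_left (by linarith),
            max_eq_right (by linarith)]; ring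
      rw [habs1]; ring
    have e2 : ∑ u, ∑ v, w u v * max 0 (h v - h u)
        = ∑ u, ∑ v, w u v * max 0 (h u - h v) := by
      rw [Finset.sum_comm]
      exact Finset.sum_congr rfl fun x _ =>
        Finset.sum_congr rfl fun y _ => by rw [hsym]
    rw [e, e2]; ring
  have hDpos : 0 < ∑ v, deg w v * h v :=
    Finset.sum_pos' (fun v _ => mul_nonneg (hdegnn v) (hhnn v))
      ⟨v0, Finset.mem_univ v0, mul_pos (lt_of_lt_of_le one_pos (hdeg v0)) hv0pos⟩
  have hφle : φ ≤ ((1 / 2 : ℝ) * ∑ u, ∑ v, w u v * |h u - h v|) /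
      (∑ v, deg w v * h v) := by
    rw [le_div_iff₀ hDpos, habs]
    exact hkey
  -- conductance of S equals φ
  have hSsub : S ⊆ supp h := by
    intro v hv
    simp only [hS, thresholdSet, Finset.mem_filter, Finset.mem_univ, true_and] at hv
    simp only [supp, Finset.mem_filter, Finset.mem_univ, true_and]
    intro hc; rw [hc] at hv; linarith
  have hvolS : vol w S ≤ vol w Finset.univ / 2 := by
    refine le_trans ?_ hsupp
    exact Finset.sum_le_sum_of_subset_of_nonneg hSsub fun v _ _ => hdegnn v
  have hsplit : vol w S + vol w Sᶜ = vol w Finset.univ :=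
    Finset.sum_add_sum_compl S (deg w)
  have hminvol : min (vol w S) (vol w Sᶜ) = vol w S :=
    min_eq_left (by linarith)
  have hcond : conductance w S = φ := by
    rw [conductance, hminvol]
  -- S is a proper subset
  have hvoluniv : 0 < vol w Finset.univ := by
    have : Nonempty (Fin n) := ⟨⟨0, by omega⟩⟩
    exact hvolpos Finset.univ Finset.univ_nonempty
  have hSne : S ≠ Finset.univ := by
    intro hc
    have hsu : supp h = Finset.univ :=
      Finset.eq_univ_of_forall fun v => hSsub (hc ▸ Finset.mem_univ v)
    rw [hsu] at hsupp
    linarith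
  constructor
  · refine le_trans (csInf_le ?_ ?_) (hcond ▸ hφle)
    · refine ⟨0, ?_⟩
      rintro x ⟨t, h1, h2, rfl⟩
      exact div_nonneg (cut_nonneg w hnn _ _)
        (le_min (vol_nonneg w hdegnn _) (vol_nonneg w hdegnn _))
    · exact ⟨tstar, hTne, hSne, rfl⟩
  · exact ⟨tstar, htpos, hTne, hcond ▸ hφle⟩

end

end CheegerHigher
end

section
/- Let f : V → ℝ be nonnegative with vol(supp(f)) ≤ vol(V)/2, and let I = [b, a] be an interval with a > b ≥ 0 and vol_f(a) > 0. Then 𝓔_f(I) ≥ φ(f)² · vol_f(a)² · len(I)² / (φ(f) · vol_f(a) + vol_f(I)). -/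
open scoped Classical

namespace CheegerHigher

noncomputable section

variable {n : ℕ}

/-- Ordered interval-overlap length `max 0 (min a (f u) - max b (f v))`. -/
private def ell (f : Fin n → ℝ) (b a : ℝ) (u v : Fin n) : ℝ :=
  max 0 (min a (f u) - max b (f v))

private lemma ell_nonneg (f : Fin n → ℝ) (b a : ℝ) (u v : Fin n) : 0 ≤ ell f b a u v :=
  le_max_left _ _

private lemma integral_indicator_Ioc (b a c d : ℝ) :
    ∫ t in Set.Ioc b a, (Set.Ioc c d).indicator (fun _ => (1:ℝ)) t
      = max 0 (min a d - max b c) := by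
  rw [MeasureTheory.integral_indicator measurableSet_Ioc,
      MeasureTheory.Measure.restrict_restrict measurableSet_Ioc,
      MeasureTheory.setIntegral_const, Set.Ioc_inter_Ioc, Real.volume_real_Ioc, smul_eq_mul, mul_one]
  rw [max_comm, min_comm d a, max_comm c b]

private lemma integrable_indicator_Ioc (b a c d : ℝ) :
    MeasureTheory.Integrable ((Set.Ioc c d).indicator (fun _ => (1:ℝ)))
      (MeasureTheory.volume.restrict (Set.Ioc b a)) := by
  refine (MeasureTheory.integrable_indicator_iff measurableSet_Ioc).mpr ?_
  refine (MeasureTheory.integrableOn_const_iff).mpr (Or.inr ?_)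
  rw [MeasureTheory.Measure.restrict_apply measurableSet_Ioc]
  exact lt_of_le_of_lt (MeasureTheory.measure_mono Set.inter_subset_right) measure_Ioc_lt_top

private lemma max_sq_split (a b x y : ℝ) :
    max 0 (min a (max x y) - max b (min x y)) ^ 2
      = max 0 (min a x - max b y) ^ 2 + max 0 (min a y - max b x) ^ 2 := by
  rcases le_total y x with h | h
  · have h0 : max 0 (min a y - max b x) = 0 :=
      max_eq_left (sub_nonpos.mpr (le_trans (min_le_right a y) (le_trans h (le_max_right b x))))
    rw [max_eq_left h, min_eq_right h, h0]; ring
  · have h0 : max 0 (min a x - max b y) = 0 :=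
      max_eq_left (sub_nonpos.mpr (le_trans (min_le_right a x) (le_trans h (le_max_right b y))))
    rw [max_eq_right h, min_eq_left h, h0]; ring

/-- Energy lower bound on an interval `I = (b,a]`:
`𝓔_f(I) ≥ φ(f)²·vol_f(a)²·len(I)² / (φ(f)·vol_f(a) + vol_f(I))`. -/
theorem energy_lower_bound
    (hn : 2 ≤ n) (w : Fin n → Fin n → ℝ)
    (hsym : ∀ u v, w u v = w v u) (hnn : ∀ u v, 0 ≤ w u v)
    (hloop : ∀ v, w v v = 0) (hdeg : ∀ v, 1 ≤ deg w v)
    (f : Fin n → ℝ) (hfnn : ∀ v, 0 ≤ f v)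
    (hsupp : vol w (supp f) ≤ vol w Finset.univ / 2)
    (a b : ℝ) (hb : 0 ≤ b) (hab : b < a)
    (hva : 0 < vol w (thresholdSet f a)) :
    phiF w f ^ 2 * vol w (thresholdSet f a) ^ 2 * (a - b) ^ 2 /
        (phiF w f * vol w (thresholdSet f a) +
          vol w (Finset.univ.filter fun v => b < f v ∧ f v ≤ a))
      ≤ intervalEnergy w f b a := by
  classical
  -- basic positivity facts
  have hdeg0 : ∀ v, (0:ℝ) ≤ deg w v := fun v => le_trans zero_le_one (hdeg v)
  have hvol_nonneg : ∀ S : Finset (Fin n), 0 ≤ vol w S :=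
    fun S => Finset.sum_nonneg fun v _ => hdeg0 v
  have hvol_mono : ∀ S T : Finset (Fin n), S ⊆ T → vol w S ≤ vol w T := fun S T h =>
    Finset.sum_le_sum_of_subset_of_nonneg h fun v _ _ => hdeg0 v
  have hvolU_pos : (0:ℝ) < vol w Finset.univ := by
    have h1 : (n:ℝ) ≤ vol w Finset.univ := by
      calc (n:ℝ) = ∑ _v : Fin n, (1:ℝ) := by simp
      _ ≤ _ := Finset.sum_le_sum fun v _ => hdeg v
    have h2 : (0:ℝ) < n := by exact_mod_cast Nat.lt_of_lt_of_le Nat.zero_lt_two hn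
    linarith
  have hsupp_ne : supp f ≠ Finset.univ := by
    intro h
    rw [h] at hsupp
    linarith
  have hthresh_supp : ∀ t : ℝ, 0 < t → thresholdSet f t ⊆ supp f := by
    intro t ht v hv
    simp only [thresholdSet, Finset.mem_filter, Finset.mem_univ, true_and] at hv
    simp only [supp, Finset.mem_filter, Finset.mem_univ, true_and]
    exact ne_of_gt (lt_of_lt_of_le ht hv)
  have hthresh_mono : ∀ s t : ℝ, s ≤ t → thresholdSet f t ⊆ thresholdSet f s := by
    intro s t hst v hv
    simp only [thresholdSet, Finset.mem_filter, Finset.mem_univ, true_and] at hv ⊢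
    linarith
  have hAne : (thresholdSet f a).Nonempty := by
    rw [Finset.nonempty_iff_ne_empty]
    intro h
    rw [h] at hva
    simp [vol] at hva
  have ha0 : 0 < a := lt_of_le_of_lt hb hab
  have hAproper : thresholdSet f a ≠ Finset.univ := by
    intro h
    have h2 := hthresh_supp a ha0
    rw [h] at h2
    exact hsupp_ne (Finset.univ_subset_iff.mp h2)
  have hcond_nonneg : ∀ x ∈ {x | ∃ t : ℝ, (thresholdSet f t).Nonempty ∧
      thresholdSet f t ≠ Finset.univ ∧ x = conductance w (thresholdSet f t)}, (0:ℝ) ≤ x := by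
    rintro x ⟨t, -, -, rfl⟩
    exact div_nonneg
      (Finset.sum_nonneg fun u _ => Finset.sum_nonneg fun v _ => hnn u v)
      (le_min (hvol_nonneg _) (hvol_nonneg _))
  have hbdd : BddBelow {x | ∃ t : ℝ, (thresholdSet f t).Nonempty ∧
      thresholdSet f t ≠ Finset.univ ∧ x = conductance w (thresholdSet f t)} :=
    ⟨0, hcond_nonneg⟩
  have hphi0 : 0 ≤ phiF w f :=
    le_csInf ⟨conductance w (thresholdSet f a), a, hAne, hAproper, rfl⟩ hcond_nonneg
  -- key pointwise cut bound
  have hkey : ∀ t : ℝ, t ∈ Set.Ioc b a →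
      phiF w f * vol w (thresholdSet f a)
        ≤ cutWeight w (thresholdSet f t) (thresholdSet f t)ᶜ := by
    intro t ht
    obtain ⟨hbt, hta⟩ := ht
    have hsub : thresholdSet f a ⊆ thresholdSet f t := hthresh_mono t a hta
    have hpos : 0 < vol w (thresholdSet f t) := lt_of_lt_of_le hva (hvol_mono _ _ hsub)
    have hhalf : vol w (thresholdSet f t) ≤ vol w Finset.univ / 2 :=
      le_trans (hvol_mono _ _ (hthresh_supp t (lt_of_le_of_lt hb hbt))) hsupp
    have hsplit : vol w (thresholdSet f t) + vol w (thresholdSet f t)ᶜ = vol w Finset.univ :=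
      Finset.sum_add_sum_compl _ _
    have hmin : min (vol w (thresholdSet f t)) (vol w (thresholdSet f t)ᶜ)
        = vol w (thresholdSet f t) := min_eq_left (by linarith)
    have hne : (thresholdSet f t).Nonempty := hAne.mono hsub
    have hproper : thresholdSet f t ≠ Finset.univ := by
      intro h
      have h2 := hthresh_supp t (lt_of_le_of_lt hb hbt)
      rw [h] at h2
      exact hsupp_ne (Finset.univ_subset_iff.mp h2)
    have hle : phiF w f ≤ conductance w (thresholdSet f t) :=
      csInf_le hbdd ⟨t, hne, hproper, rfl⟩
    rw [conductance, hmin] at hle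
    have h3 := (le_div_iff₀ hpos).mp hle
    calc phiF w f * vol w (thresholdSet f a)
        ≤ phiF w f * vol w (thresholdSet f t) :=
          mul_le_mul_of_nonneg_left (hvol_mono _ _ hsub) hphi0
    _ ≤ _ := h3
  -- cut weight as a sum of indicators
  have hcut_eq : ∀ t : ℝ, cutWeight w (thresholdSet f t) (thresholdSet f t)ᶜ
      = ∑ u, ∑ v, w u v * (Set.Ioc (f v) (f u)).indicator (fun _ => (1:ℝ)) t := by
    intro t
    rw [cutWeight, thresholdSet, Finset.compl_filter, Finset.sum_filter]
    refine Finset.sum_congr rfl fun u _ => ?_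
    by_cases hu : t ≤ f u
    · rw [if_pos hu, Finset.sum_filter]
      refine Finset.sum_congr rfl fun v _ => ?_
      by_cases hv : t ≤ f v
      · simp [Set.indicator_apply, Set.mem_Ioc, hv, not_lt.mpr hv]
      · simp [Set.indicator_apply, Set.mem_Ioc, hv, not_le.mp hv, hu]
    · rw [if_neg hu]
      symm
      apply Finset.sum_eq_zero
      intro v _
      simp only [Set.indicator_apply, Set.mem_Ioc]
      rw [if_neg (fun h => hu h.2), mul_zero]
  -- the integral bound: φ·vol_f(a)·(a-b) ≤ T
  have hIntEach : ∀ u v : Fin n, MeasureTheory.Integrable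
      (fun t => w u v * (Set.Ioc (f v) (f u)).indicator (fun _ => (1:ℝ)) t)
      (MeasureTheory.volume.restrict (Set.Ioc b a)) :=
    fun u v => (integrable_indicator_Ioc b a (f v) (f u)).const_mul _
  have hTint : phiF w f * vol w (thresholdSet f a) * (a - b)
      ≤ ∑ u, ∑ v, w u v * ell f b a u v := by
    have h1 : ∫ _t in Set.Ioc b a, (phiF w f * vol w (thresholdSet f a))
        = phiF w f * vol w (thresholdSet f a) * (a - b) := by
      rw [MeasureTheory.setIntegral_const, Real.volume_real_Ioc, smul_eq_mul,
        max_eq_left (by linarith : (0:ℝ) ≤ a - b)]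
      ring
    have h2 : ∫ t in Set.Ioc b a,
        (∑ u, ∑ v, w u v * (Set.Ioc (f v) (f u)).indicator (fun _ => (1:ℝ)) t)
        = ∑ u, ∑ v, w u v * ell f b a u v := by
      rw [MeasureTheory.integral_finset_sum _ fun u _ =>
        MeasureTheory.integrable_finset_sum _ fun v _ => hIntEach u v]
      refine Finset.sum_congr rfl fun u _ => ?_
      rw [MeasureTheory.integral_finset_sum _ fun v _ => hIntEach u v]
      refine Finset.sum_congr rfl fun v _ => ?_
      rw [MeasureTheory.integral_const_mul, integral_indicator_Ioc]
      rfl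
    rw [← h1, ← h2]
    refine MeasureTheory.setIntegral_mono_on
      ((MeasureTheory.integrableOn_const_iff).mpr (Or.inr measure_Ioc_lt_top))
      (MeasureTheory.integrable_finset_sum _ fun u _ =>
        MeasureTheory.integrable_finset_sum _ fun v _ => hIntEach u v)
      measurableSet_Ioc (fun t ht => ?_)
    rw [← hcut_eq t]
    exact hkey t ht
  -- interval energy equals the ordered-sum energy
  have hE : intervalEnergy w f b a = ∑ u, ∑ v, w u v * ell f b a u v ^ 2 := by
    rw [intervalEnergy]
    have hswap : ∑ u, ∑ v, w u v * ell f b a v u ^ 2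
        = ∑ u, ∑ v, w u v * ell f b a u v ^ 2 := by
      rw [Finset.sum_comm]
      exact Finset.sum_congr rfl fun u _ => Finset.sum_congr rfl fun v _ => by rw [hsym]
    have hkey2 : ∀ u v : Fin n,
        w u v * max 0 (min a (max (f u) (f v)) - max b (min (f u) (f v))) ^ 2
        = w u v * ell f b a u v ^ 2 + w u v * ell f b a v u ^ 2 := by
      intro u v
      rw [max_sq_split a b (f u) (f v)]
      show _ = w u v * max 0 (min a (f u) - max b (f v)) ^ 2
        + w u v * max 0 (min a (f v) - max b (f u)) ^ 2
      ring
    calc (1/2 : ℝ) * ∑ u, ∑ v,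
        w u v * max 0 (min a (max (f u) (f v)) - max b (min (f u) (f v))) ^ 2
        = (1/2 : ℝ) * ∑ u, ∑ v,
          (w u v * ell f b a u v ^ 2 + w u v * ell f b a v u ^ 2) := by
          congr 1
          exact Finset.sum_congr rfl fun u _ => Finset.sum_congr rfl fun v _ => hkey2 u v
    _ = (1/2 : ℝ) * ((∑ u, ∑ v, w u v * ell f b a u v ^ 2)
          + ∑ u, ∑ v, w u v * ell f b a v u ^ 2) := by
          simp [Finset.sum_add_distrib]
    _ = ∑ u, ∑ v, w u v * ell f b a u v ^ 2 := by rw [hswap]; ring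
  have hE0 : 0 ≤ ∑ u, ∑ v, w u v * ell f b a u v ^ 2 :=
    Finset.sum_nonneg fun u _ => Finset.sum_nonneg fun v _ =>
      mul_nonneg (hnn u v) (sq_nonneg _)
  -- Cauchy–Schwarz : T² ≤ E · W
  have hCS : (∑ u, ∑ v, w u v * ell f b a u v) ^ 2
      ≤ (∑ u, ∑ v, w u v * ell f b a u v ^ 2)
        * ∑ u, ∑ v, w u v * (if 0 < ell f b a u v then (1:ℝ) else 0) := by
    have h := Finset.sum_mul_sq_le_sq_mul_sq (Finset.univ ×ˢ Finset.univ)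
      (fun p : Fin n × Fin n => Real.sqrt (w p.1 p.2) * ell f b a p.1 p.2)
      (fun p : Fin n × Fin n =>
        Real.sqrt (w p.1 p.2) * (if 0 < ell f b a p.1 p.2 then (1:ℝ) else 0))
    have e1 : ∑ p ∈ Finset.univ ×ˢ Finset.univ,
        (Real.sqrt (w p.1 p.2) * ell f b a p.1 p.2)
          * (Real.sqrt (w p.1 p.2) * (if 0 < ell f b a p.1 p.2 then (1:ℝ) else 0))
        = ∑ u, ∑ v, w u v * ell f b a u v := by
      rw [Finset.sum_product]
      refine Finset.sum_congr rfl fun u _ => Finset.sum_congr rfl fun v _ => ?_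
      by_cases h : 0 < ell f b a u v
      · rw [if_pos h]
        calc (Real.sqrt (w u v) * ell f b a u v) * (Real.sqrt (w u v) * 1)
            = (Real.sqrt (w u v) * Real.sqrt (w u v)) * ell f b a u v := by ring
        _ = w u v * ell f b a u v := by rw [Real.mul_self_sqrt (hnn u v)]
      · rw [if_neg h, mul_zero, mul_zero]
        rw [le_antisymm (not_lt.mp h) (ell_nonneg f b a u v), mul_zero]
    have e2 : ∑ p ∈ Finset.univ ×ˢ Finset.univ,
        (Real.sqrt (w p.1 p.2) * ell f b a p.1 p.2) ^ 2
        = ∑ u, ∑ v, w u v * ell f b a u v ^ 2 := by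
      rw [Finset.sum_product]
      refine Finset.sum_congr rfl fun u _ => Finset.sum_congr rfl fun v _ => ?_
      rw [mul_pow, Real.sq_sqrt (hnn u v)]
    have e3 : ∑ p ∈ Finset.univ ×ˢ Finset.univ,
        (Real.sqrt (w p.1 p.2) * (if 0 < ell f b a p.1 p.2 then (1:ℝ) else 0)) ^ 2
        = ∑ u, ∑ v, w u v * (if 0 < ell f b a u v then (1:ℝ) else 0) := by
      rw [Finset.sum_product]
      refine Finset.sum_congr rfl fun u _ => Finset.sum_congr rfl fun v _ => ?_
      rw [mul_pow, Real.sq_sqrt (hnn u v)]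
      by_cases h : 0 < ell f b a u v <;> simp [h]
    rw [e1, e2, e3] at h
    exact h
  -- basic facts about when ell is positive
  have hell_pos : ∀ u v, 0 < ell f b a u v → b < f u ∧ f v < a ∧ f v < f u := by
    intro u v h
    have hlt : max b (f v) < min a (f u) := by
      by_contra hc
      push_neg at hc
      have h0 : ell f b a u v = 0 := max_eq_left (sub_nonpos.mpr hc)
      rw [h0] at h
      exact lt_irrefl 0 h
    exact ⟨lt_of_le_of_lt (le_max_left b (f v)) (lt_of_lt_of_le hlt (min_le_right a (f u))),
      lt_of_le_of_lt (le_max_right b (f v)) (lt_of_lt_of_le hlt (min_le_left a (f u))),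
      lt_of_le_of_lt (le_max_right b (f v)) (lt_of_lt_of_le hlt (min_le_right a (f u)))⟩
  have hnotboth : ∀ u v, 0 < ell f b a u v → ¬ 0 < ell f b a v u := by
    intro u v h1 h2
    exact lt_asymm (hell_pos u v h1).2.2 (hell_pos v u h2).2.2
  -- W ≤ S1 + S2 + A
  have hWsplit : (∑ u, ∑ v, w u v * (if 0 < ell f b a u v then (1:ℝ) else 0))
      ≤ (∑ u, ∑ v, w u v *
          (if (b < f u ∧ f u ≤ a) ∧ 0 < ell f b a u v then (1:ℝ) else 0))
        + (∑ u, ∑ v, w u v *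
          (if (b < f v ∧ f v ≤ a) ∧ ¬(b < f u ∧ f u ≤ a) ∧ 0 < ell f b a u v
            then (1:ℝ) else 0))
        + ∑ u, ∑ v, w u v * (if f v ≤ b ∧ a < f u then (1:ℝ) else 0) := by
    have hpt : ∀ u v, w u v * (if 0 < ell f b a u v then (1:ℝ) else 0)
        ≤ w u v * (if (b < f u ∧ f u ≤ a) ∧ 0 < ell f b a u v then (1:ℝ) else 0)
          + w u v * (if (b < f v ∧ f v ≤ a) ∧ ¬(b < f u ∧ f u ≤ a) ∧ 0 < ell f b a u v
              then (1:ℝ) else 0)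
          + w u v * (if f v ≤ b ∧ a < f u then (1:ℝ) else 0) := by
      intro u v
      have hw := hnn u v
      by_cases h : 0 < ell f b a u v
      · obtain ⟨h1, h2, h3⟩ := hell_pos u v h
        rw [if_pos h]
        by_cases hu : b < f u ∧ f u ≤ a
        · rw [if_pos ⟨hu, h⟩]
          have t2 : (0:ℝ) ≤ w u v * (if (b < f v ∧ f v ≤ a) ∧ ¬(b < f u ∧ f u ≤ a)
              ∧ 0 < ell f b a u v then (1:ℝ) else 0) :=
            mul_nonneg hw (by split_ifs <;> norm_num)
          have t3 : (0:ℝ) ≤ w u v * (if f v ≤ b ∧ a < f u then (1:ℝ) else 0) :=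
            mul_nonneg hw (by split_ifs <;> norm_num)
          linarith
        · rw [if_neg (fun hh => hu hh.1)]
          by_cases hv : b < f v ∧ f v ≤ a
          · rw [if_pos ⟨hv, hu, h⟩]
            have t3 : (0:ℝ) ≤ w u v * (if f v ≤ b ∧ a < f u then (1:ℝ) else 0) :=
              mul_nonneg hw (by split_ifs <;> norm_num)
            linarith
          · have hua : a < f u := by
              by_contra hc
              exact hu ⟨h1, not_lt.mp hc⟩
            have hvb : f v ≤ b := by
              by_contra hc
              exact hv ⟨not_le.mp hc, le_of_lt h2⟩
            rw [if_neg (fun hh => hv hh.1), if_pos ⟨hvb, hua⟩]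
            linarith
      · rw [if_neg h, mul_zero]
        have t1 : (0:ℝ) ≤ w u v * (if (b < f u ∧ f u ≤ a) ∧ 0 < ell f b a u v
            then (1:ℝ) else 0) := mul_nonneg hw (by split_ifs <;> norm_num)
        have t2 : (0:ℝ) ≤ w u v * (if (b < f v ∧ f v ≤ a) ∧ ¬(b < f u ∧ f u ≤ a)
            ∧ 0 < ell f b a u v then (1:ℝ) else 0) :=
          mul_nonneg hw (by split_ifs <;> norm_num)
        have t3 : (0:ℝ) ≤ w u v * (if f v ≤ b ∧ a < f u then (1:ℝ) else 0) :=
          mul_nonneg hw (by split_ifs <;> norm_num)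
        linarith
    calc (∑ u, ∑ v, w u v * (if 0 < ell f b a u v then (1:ℝ) else 0))
        ≤ ∑ u, ∑ v,
          (w u v * (if (b < f u ∧ f u ≤ a) ∧ 0 < ell f b a u v then (1:ℝ) else 0)
          + w u v * (if (b < f v ∧ f v ≤ a) ∧ ¬(b < f u ∧ f u ≤ a) ∧ 0 < ell f b a u v
              then (1:ℝ) else 0)
          + w u v * (if f v ≤ b ∧ a < f u then (1:ℝ) else 0)) :=
          Finset.sum_le_sum fun u _ => Finset.sum_le_sum fun v _ => hpt u v
    _ = _ := by simp [Finset.sum_add_distrib]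
  -- reindex S2
  have hS2 : (∑ u, ∑ v, w u v *
        (if (b < f v ∧ f v ≤ a) ∧ ¬(b < f u ∧ f u ≤ a) ∧ 0 < ell f b a u v
          then (1:ℝ) else 0))
      = ∑ u, ∑ v, w u v *
        (if (b < f u ∧ f u ≤ a) ∧ ¬(b < f v ∧ f v ≤ a) ∧ 0 < ell f b a v u
          then (1:ℝ) else 0) := by
    rw [Finset.sum_comm]
    exact Finset.sum_congr rfl fun u _ => Finset.sum_congr rfl fun v _ => by rw [hsym]
  -- S1 + S2 ≤ vol(mid)
  have hS12 : (∑ u, ∑ v, w u v *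
        (if (b < f u ∧ f u ≤ a) ∧ 0 < ell f b a u v then (1:ℝ) else 0))
      + (∑ u, ∑ v, w u v *
        (if (b < f v ∧ f v ≤ a) ∧ ¬(b < f u ∧ f u ≤ a) ∧ 0 < ell f b a u v
          then (1:ℝ) else 0))
      ≤ vol w (Finset.univ.filter fun v => b < f v ∧ f v ≤ a) := by
    rw [hS2, ← Finset.sum_add_distrib]
    have hmid : vol w (Finset.univ.filter fun v => b < f v ∧ f v ≤ a)
        = ∑ u, ∑ v, w u v * (if b < f u ∧ f u ≤ a then (1:ℝ) else 0) := by
      rw [vol, Finset.sum_filter]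
      refine Finset.sum_congr rfl fun u _ => ?_
      by_cases h : b < f u ∧ f u ≤ a
      · simp [deg, h]
      · simp [h]
    rw [hmid]
    refine Finset.sum_le_sum fun u _ => ?_
    rw [← Finset.sum_add_distrib]
    refine Finset.sum_le_sum fun v _ => ?_
    have hw := hnn u v
    by_cases hc3 : b < f u ∧ f u ≤ a
    · rw [if_pos hc3, mul_one]
      by_cases h1 : 0 < ell f b a u v
      · rw [if_pos ⟨hc3, h1⟩, if_neg (fun hh => hnotboth u v h1 hh.2.2)]
        linarith
      · rw [if_neg (fun hh => h1 hh.2)]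
        by_cases h2 : (b < f u ∧ f u ≤ a) ∧ ¬(b < f v ∧ f v ≤ a) ∧ 0 < ell f b a v u
        · rw [if_pos h2]; linarith
        · rw [if_neg h2]; linarith
    · rw [if_neg (fun hh => hc3 hh.1), if_neg (fun hh => hc3 hh.1), if_neg hc3]
      simp
  -- A · (a-b)² ≤ E
  have hAE : (∑ u, ∑ v, w u v * (if f v ≤ b ∧ a < f u then (1:ℝ) else 0)) * (a - b) ^ 2
      ≤ ∑ u, ∑ v, w u v * ell f b a u v ^ 2 := by
    rw [Finset.sum_mul]
    refine Finset.sum_le_sum fun u _ => ?_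
    rw [Finset.sum_mul]
    refine Finset.sum_le_sum fun v _ => ?_
    by_cases h : f v ≤ b ∧ a < f u
    · rw [if_pos h]
      have he : ell f b a u v = a - b := by
        show max 0 (min a (f u) - max b (f v)) = a - b
        rw [min_eq_left (le_of_lt h.2), max_eq_left h.1, max_eq_right (by linarith)]
      rw [he]
      apply le_of_eq
      ring
    · rw [if_neg h, mul_zero, zero_mul]
      exact mul_nonneg (hnn u v) (sq_nonneg _)
  have hA0 : 0 ≤ ∑ u, ∑ v, w u v * (if f v ≤ b ∧ a < f u then (1:ℝ) else 0) :=
    Finset.sum_nonneg fun u _ => Finset.sum_nonneg fun v _ =>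
      mul_nonneg (hnn u v) (by split_ifs <;> norm_num)
  -- final assembly
  have hc0 : 0 ≤ phiF w f * vol w (thresholdSet f a) := mul_nonneg hphi0 (le_of_lt hva)
  have hVm0 : 0 ≤ vol w (Finset.univ.filter fun v => b < f v ∧ f v ≤ a) := hvol_nonneg _
  rcases eq_or_lt_of_le (add_nonneg hc0 hVm0) with hzero | hpos
  · rw [← hzero, div_zero, hE]
    exact hE0
  · rw [hE, div_le_iff₀ hpos]
    rcases le_or_gt (phiF w f * vol w (thresholdSet f a))
        (∑ u, ∑ v, w u v * (if f v ≤ b ∧ a < f u then (1:ℝ) else 0)) with hcase | hcase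
    · have h2 : phiF w f * vol w (thresholdSet f a) * (a - b) ^ 2
          ≤ ∑ u, ∑ v, w u v * ell f b a u v ^ 2 :=
        le_trans (mul_le_mul_of_nonneg_right hcase (sq_nonneg _)) hAE
      calc phiF w f ^ 2 * vol w (thresholdSet f a) ^ 2 * (a - b) ^ 2
          = (phiF w f * vol w (thresholdSet f a) * (a - b) ^ 2)
            * (phiF w f * vol w (thresholdSet f a)) := by ring
      _ ≤ (∑ u, ∑ v, w u v * ell f b a u v ^ 2)
            * (phiF w f * vol w (thresholdSet f a)) :=
          mul_le_mul_of_nonneg_right h2 hc0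
      _ ≤ _ := mul_le_mul_of_nonneg_left (by linarith) hE0
    · have h1 : (phiF w f * vol w (thresholdSet f a) * (a - b)) ^ 2
          ≤ (∑ u, ∑ v, w u v * ell f b a u v) ^ 2 :=
        pow_le_pow_left₀ (mul_nonneg hc0 (by linarith)) hTint 2
      calc phiF w f ^ 2 * vol w (thresholdSet f a) ^ 2 * (a - b) ^ 2
          = (phiF w f * vol w (thresholdSet f a) * (a - b)) ^ 2 := by ring
      _ ≤ (∑ u, ∑ v, w u v * ell f b a u v) ^ 2 := h1
      _ ≤ (∑ u, ∑ v, w u v * ell f b a u v ^ 2)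
            * ∑ u, ∑ v, w u v * (if 0 < ell f b a u v then (1:ℝ) else 0) := hCS
      _ ≤ _ := mul_le_mul_of_nonneg_left (by linarith [hWsplit, hS12]) hE0

end

end CheegerHigher
end
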